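/- (Higher Melnikov function with vanishing constant and logarithmic terms.) Let b, c be real numbers with (b, c) ≠ (0, 0) such that (16/15)·b + (16/3)·c = 0 (vanishing of the constant term), and set M(h) = b·I_2(h) + c·I'_4(h). Then the coefficient 4b + 4c is nonzero and M(h)/h → 4b + 4c as h → 0⁺. -/

import Mathlib

open Real Set Filter intervalIntegral

/-- Right endpoint of the exterior oval: `x_max(h) = √(1 + √(1+4h))`. -/
noncomputable def xmax (h : ℝ) : ℝ := Real.sqrt (1 + Real.sqrt (1 + 4*h))

/-- Complete elliptic integral `I_i(h) = ∫_{-x_max}^{x_max} x^i √(2h + x² - x⁴/2) dx`. -/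
noncomputable def ellI (i : ℕ) (h : ℝ) : ℝ :=
  ∫ x in (-xmax h)..(xmax h), x^i * Real.sqrt (2*h + x^2 - x^4/2)

/-- Complete elliptic integral `I'_i(h) = ∫_{-x_max}^{x_max} x^i (2h + x² - x⁴/2)^{-1/2} dx`. -/
noncomputable def ellI' (i : ℕ) (h : ℝ) : ℝ :=
  ∫ x in (-xmax h)..(xmax h), x^i / Real.sqrt (2*h + x^2 - x^4/2)

open MeasureTheory

/-! ### Auxiliary development -/

noncomputable def Pm (h θ : ℝ) : ℝ :=
  ((1 + Real.sqrt (1+4*h)) * Real.sin θ^2 + (Real.sqrt (1+4*h) - 1))/2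

theorem alg_deriv (s u c q h r : ℝ) (hr2 : r^2 = 1+s) (hs2 : s^2 = 1+4*h)
    (hc2 : u^2 + c^2 = 1) (hq : q^2 = ((1+s)*u^2 + (s-1))/2) (hqne : q ≠ 0) :
    -(r^4) * ((3*u^2*c*c + u^3*(-u)) * q + (u^3*c) * ((1+s)*u*c/(2*q)))
      = (r*u)^4/q - 5*((r*u)^2 * ((r*c)^2*q)) + 4*h*((r*u)^2/q) := by
  field_simp
  linear_combination ((4*r^4*u^2*c^2 + 2*r^4*u^4)) * hq
    + ((r^4*u^4*(1+s) + 2*r^4*u^2*(s-1))) * hc2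
    + (2*r^2*u^2*(s-1)) * hr2 + (2*r^2*u^2) * hs2

theorem alg_fact (s u c h r : ℝ) (hr2 : r^2 = 1+s) (hs2 : s^2 = 1+4*h)
    (hc2 : u^2 + c^2 = 1) :
    2*h + (r*u)^2 - (r*u)^4/2 = (r*c)^2 * (((1+s)*u^2 + (s-1))/2) := by
  linear_combination (-(r^2*u^2/2)*(1+s) + (r^2/2)*(1-s)) * hc2
    + (-(r^2*u^4/2) + (1-s)/2) * hr2 + (-1/2 : ℝ) * hs2

lemma sq1_gt_one {h : ℝ} (hh : 0 < h) : 1 < Real.sqrt (1 + 4*h) := by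
  have h2 : (Real.sqrt (1+4*h))^2 = 1+4*h := Real.sq_sqrt (by linarith)
  nlinarith [Real.sqrt_nonneg (1+4*h)]

lemma sq1_sq {h : ℝ} (hh : 0 ≤ h) : (Real.sqrt (1 + 4*h))^2 = 1 + 4*h :=
  Real.sq_sqrt (by linarith)

lemma xmax_sq {h : ℝ} (hh : 0 ≤ h) : (xmax h)^2 = 1 + Real.sqrt (1 + 4*h) :=
  Real.sq_sqrt (by positivity)

lemma xmax_pos (h : ℝ) : 0 < xmax h := by
  apply Real.sqrt_pos.2; positivity

lemma image_scaled_sin {r : ℝ} (hr : 0 < r) :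
    (fun θ : ℝ => r * Real.sin θ) '' Ioo (-(π/2)) (π/2) = Ioo (-r) r := by
  ext y
  constructor
  · rintro ⟨θ, hθ, rfl⟩
    have hmem : θ ∈ Icc (-(π/2)) (π/2) := ⟨hθ.1.le, hθ.2.le⟩
    have h1 : Real.sin θ < 1 := by
      have := Real.strictMonoOn_sin hmem
        ⟨by linarith [pi_pos, hθ.2], le_refl (π/2)⟩ hθ.2
      simpa using this
    have h2 : -1 < Real.sin θ := by
      have := Real.strictMonoOn_sin
        ⟨le_refl (-(π/2)), by linarith [pi_pos, hθ.1]⟩ hmem hθ.1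
      simpa using this
    constructor <;> dsimp only <;> nlinarith
  · intro hy
    refine ⟨Real.arcsin (y/r), ⟨?_, ?_⟩, ?_⟩
    · exact Real.neg_pi_div_two_lt_arcsin.2 (by rw [lt_div_iff₀ hr]; linarith [hy.1])
    · exact Real.arcsin_lt_pi_div_two.2 (by rw [div_lt_one hr]; linarith [hy.2])
    · dsimp only
      rw [Real.sin_arcsin (by rw [le_div_iff₀ hr]; linarith [hy.1])
        (by rw [div_le_one hr]; linarith [hy.2])]
      field_simp

lemma cov {h : ℝ} (hh : 0 < h) (g : ℝ → ℝ) :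
    (∫ x in (-xmax h)..(xmax h), g x)
      = ∫ θ in Ioo (-(π/2)) (π/2), |xmax h * Real.cos θ| * g (xmax h * Real.sin θ) := by
  have hr := xmax_pos h
  rw [intervalIntegral.integral_of_le (by linarith), MeasureTheory.integral_Ioc_eq_integral_Ioo,
    ← image_scaled_sin hr,
    MeasureTheory.integral_image_eq_integral_abs_deriv_smul measurableSet_Ioo
      (fun θ _ => ((Real.hasDerivAt_sin θ).const_mul (xmax h)).hasDerivWithinAt)
      (fun θ₁ h1 θ₂ h2 e => Real.injOn_sin (Ioo_subset_Icc_self h1) (Ioo_subset_Icc_self h2)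
        (mul_left_cancel₀ hr.ne' e)) g]
  simp [smul_eq_mul]

lemma P_pos {h : ℝ} (hh : 0 < h) (θ : ℝ) : 0 < Pm h θ := by
  have h1 := sq1_gt_one hh
  have h2 : 0 ≤ (1 + Real.sqrt (1+4*h)) * Real.sin θ^2 := by positivity
  unfold Pm; linarith

lemma sqrtP_pos {h : ℝ} (hh : 0 < h) (θ : ℝ) : 0 < Real.sqrt (Pm h θ) :=
  Real.sqrt_pos.2 (P_pos hh θ)

lemma contP {h : ℝ} : Continuous (Pm h) := by
  unfold Pm; fun_prop

lemma cont_xmax : Continuous xmax := by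
  unfold xmax; fun_prop

lemma contPh (θ : ℝ) : Continuous (fun h => Pm h θ) := by
  unfold Pm; fun_prop

lemma sqrtQ_eq {h : ℝ} (hh : 0 < h) {θ : ℝ} (hθ : θ ∈ Ioo (-(π/2)) (π/2)) :
    Real.sqrt (2*h + (xmax h * Real.sin θ)^2 - (xmax h * Real.sin θ)^4/2)
      = (xmax h * Real.cos θ) * Real.sqrt (Pm h θ) := by
  have hcos := Real.cos_pos_of_mem_Ioo hθ
  have hr := xmax_pos h
  rw [alg_fact (Real.sqrt (1+4*h)) (Real.sin θ) (Real.cos θ) h (xmax h)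
      (xmax_sq hh.le) (sq1_sq hh.le) (Real.sin_sq_add_cos_sq θ)]
  rw [show Pm h θ = ((1 + Real.sqrt (1+4*h)) * Real.sin θ^2 + (Real.sqrt (1+4*h) - 1))/2 from rfl]
  rw [Real.sqrt_mul (sq_nonneg _), Real.sqrt_sq (mul_nonneg hr.le hcos.le)]

lemma ellI'_theta (i : ℕ) {h : ℝ} (hh : 0 < h) :
    ellI' i h = ∫ θ in Ioo (-(π/2)) (π/2), (xmax h * Real.sin θ)^i / Real.sqrt (Pm h θ) := by
  rw [ellI', cov hh]
  apply MeasureTheory.setIntegral_congr_fun measurableSet_Ioo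
  intro θ hθ
  have hcos := Real.cos_pos_of_mem_Ioo hθ
  have hr := xmax_pos h
  have hq := sqrtP_pos hh θ
  dsimp only
  rw [sqrtQ_eq hh hθ, abs_of_pos (by positivity)]
  rw [show xmax h * Real.cos θ * Real.sqrt (Pm h θ)
      = (xmax h * Real.cos θ) * Real.sqrt (Pm h θ) from rfl]
  rw [← mul_div_assoc, mul_div_mul_comm, div_self (by positivity), one_mul]

lemma ellI_theta (i : ℕ) {h : ℝ} (hh : 0 < h) :
    ellI i h = ∫ θ in Ioo (-(π/2)) (π/2),
      (xmax h * Real.sin θ)^i * ((xmax h * Real.cos θ)^2 * Real.sqrt (Pm h θ)) := by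
  rw [ellI, cov hh]
  apply MeasureTheory.setIntegral_congr_fun measurableSet_Ioo
  intro θ hθ
  have hcos := Real.cos_pos_of_mem_Ioo hθ
  have hr := xmax_pos h
  dsimp only
  rw [sqrtQ_eq hh hθ, abs_of_pos (by positivity)]
  ring
lemma key_identity {h : ℝ} (hh : 0 < h) :
    ellI' 4 h - 5 * ellI 2 h + 4*h*ellI' 2 h = 0 := by
  have hr := xmax_pos h
  have hab : -(π/2) ≤ π/2 := by linarith [pi_pos]
  have hPc : Continuous (fun θ => Real.sqrt (Pm h θ)) := Real.continuous_sqrt.comp contP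
  have hPne : ∀ θ : ℝ, Real.sqrt (Pm h θ) ≠ 0 := fun θ => (sqrtP_pos hh θ).ne'
  have c4 : Continuous (fun θ => (xmax h * Real.sin θ)^4 / Real.sqrt (Pm h θ)) :=
    Continuous.div (by fun_prop) hPc hPne
  have c2' : Continuous (fun θ => (xmax h * Real.sin θ)^2 / Real.sqrt (Pm h θ)) :=
    Continuous.div (by fun_prop) hPc hPne
  have c2 : Continuous (fun θ =>
      (xmax h * Real.sin θ)^2 * ((xmax h * Real.cos θ)^2 * Real.sqrt (Pm h θ))) := by
    fun_prop
  have hi4 : IntervalIntegrable (fun θ => (xmax h * Real.sin θ)^4 / Real.sqrt (Pm h θ))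
      volume (-(π/2)) (π/2) := c4.intervalIntegrable _ _
  have hi2' : IntervalIntegrable (fun θ => (xmax h * Real.sin θ)^2 / Real.sqrt (Pm h θ))
      volume (-(π/2)) (π/2) := c2'.intervalIntegrable _ _
  have hi2 : IntervalIntegrable (fun θ =>
      (xmax h * Real.sin θ)^2 * ((xmax h * Real.cos θ)^2 * Real.sqrt (Pm h θ)))
      volume (-(π/2)) (π/2) := c2.intervalIntegrable _ _
  have hderiv : ∀ θ : ℝ, HasDerivAt
      (fun t => -(xmax h^4) * ((Real.sin t^3 * Real.cos t) * Real.sqrt (Pm h t)))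
      ((xmax h * Real.sin θ)^4/Real.sqrt (Pm h θ)
        - 5*((xmax h * Real.sin θ)^2 * ((xmax h * Real.cos θ)^2 * Real.sqrt (Pm h θ)))
        + 4*h*((xmax h * Real.sin θ)^2/Real.sqrt (Pm h θ))) θ := by
    intro θ
    have hP : HasDerivAt (fun t => Pm h t)
        ((1 + Real.sqrt (1+4*h)) * Real.sin θ * Real.cos θ) θ := by
      have := ((((Real.hasDerivAt_sin θ).pow 2).const_mul
        (1 + Real.sqrt (1+4*h))).add_const (Real.sqrt (1+4*h) - 1)).div_const 2
      refine this.congr_deriv ?_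
      norm_num; ring
    have hQ : HasDerivAt (fun t => Real.sqrt (Pm h t))
        ((1 + Real.sqrt (1+4*h)) * Real.sin θ * Real.cos θ / (2*Real.sqrt (Pm h θ))) θ :=
      hP.sqrt (P_pos hh θ).ne'
    have h3 : HasDerivAt (fun t => Real.sin t^3 * Real.cos t)
        (3*Real.sin θ^2*Real.cos θ*Real.cos θ + Real.sin θ^3*(-Real.sin θ)) θ := by
      have := ((Real.hasDerivAt_sin θ).pow 3).mul (Real.hasDerivAt_cos θ)
      refine this.congr_deriv ?_
      simp only [Pi.pow_apply]; norm_num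
    have hF := (h3.mul hQ).const_mul (-(xmax h^4))
    refine hF.congr_deriv ?_
    rw [← alg_deriv (Real.sqrt (1+4*h)) (Real.sin θ) (Real.cos θ) (Real.sqrt (Pm h θ)) h
      (xmax h) (xmax_sq hh.le) (sq1_sq hh.le) (Real.sin_sq_add_cos_sq θ)
      (Real.sq_sqrt (P_pos hh θ).le) (hPne θ)]
    try ring
  have hFTC := intervalIntegral.integral_eq_sub_of_hasDerivAt
    (f := fun t => -(xmax h^4) * ((Real.sin t^3 * Real.cos t) * Real.sqrt (Pm h t)))
    (fun θ _ => hderiv θ) ((hi4.sub (hi2.const_mul 5)).add (hi2'.const_mul (4*h)))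
  have hIoo : ∀ f : ℝ → ℝ, (∫ θ in Ioo (-(π/2)) (π/2), f θ) = ∫ θ in (-(π/2))..(π/2), f θ :=
    fun f => by rw [intervalIntegral.integral_of_le hab, MeasureTheory.integral_Ioc_eq_integral_Ioo]
  rw [ellI'_theta 4 hh, ellI'_theta 2 hh, ellI_theta 2 hh, hIoo, hIoo, hIoo]
  rw [show (5:ℝ) * (∫ θ in (-(π/2))..(π/2),
      (xmax h * Real.sin θ)^2 * ((xmax h * Real.cos θ)^2 * Real.sqrt (Pm h θ)))
    = ∫ θ in (-(π/2))..(π/2),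
      5 * ((xmax h * Real.sin θ)^2 * ((xmax h * Real.cos θ)^2 * Real.sqrt (Pm h θ)))
    from (intervalIntegral.integral_const_mul _ _).symm]
  rw [show (4*h) * (∫ θ in (-(π/2))..(π/2), (xmax h * Real.sin θ)^2 / Real.sqrt (Pm h θ))
    = ∫ θ in (-(π/2))..(π/2), 4*h * ((xmax h * Real.sin θ)^2 / Real.sqrt (Pm h θ))
    from (intervalIntegral.integral_const_mul _ _).symm]
  rw [← intervalIntegral.integral_sub hi4 (hi2.const_mul 5),
    ← intervalIntegral.integral_add (hi4.sub (hi2.const_mul 5)) (hi2'.const_mul (4*h))]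
  rw [hFTC]
  simp [Real.cos_pi_div_two]
lemma abs_sin_integral : (∫ θ in Ioo (-(π/2)) (π/2), 2*|Real.sin θ|) = 4 := by
  have hab : -(π/2) ≤ π/2 := by linarith [pi_pos]
  rw [← MeasureTheory.integral_Ioc_eq_integral_Ioo, ← intervalIntegral.integral_of_le hab]
  have hc : Continuous fun θ : ℝ => 2*|Real.sin θ| := by fun_prop
  have h1 : IntervalIntegrable (fun θ : ℝ => 2*|Real.sin θ|) volume (-(π/2)) 0 :=
    hc.intervalIntegrable _ _
  have h2 : IntervalIntegrable (fun θ : ℝ => 2*|Real.sin θ|) volume 0 (π/2) :=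
    hc.intervalIntegrable _ _
  rw [← intervalIntegral.integral_add_adjacent_intervals h1 h2]
  have e1 : (∫ θ in (-(π/2))..0, 2*|Real.sin θ|) = ∫ θ in (-(π/2))..0, -2*Real.sin θ := by
    apply intervalIntegral.integral_congr
    intro θ hθ
    rw [uIcc_of_le (by linarith [pi_pos])] at hθ
    dsimp only
    have : Real.sin θ ≤ 0 := Real.sin_nonpos_of_nonpos_of_neg_pi_le
      (by linarith [hθ.2]) (by linarith [pi_pos, hθ.1])
    rw [abs_of_nonpos this]; ring
  have e2 : (∫ θ in (0:ℝ)..(π/2), 2*|Real.sin θ|) = ∫ θ in (0:ℝ)..(π/2), 2*Real.sin θ := by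
    apply intervalIntegral.integral_congr
    intro θ hθ
    rw [uIcc_of_le (by linarith [pi_pos])] at hθ
    dsimp only
    have : 0 ≤ Real.sin θ := Real.sin_nonneg_of_nonneg_of_le_pi hθ.1 (by linarith [pi_pos, hθ.2])
    rw [abs_of_nonneg this]
  rw [e1, e2, intervalIntegral.integral_const_mul, intervalIntegral.integral_const_mul,
    integral_sin, integral_sin]
  norm_num

lemma tendsto_ellI'2 : Tendsto (fun h => ellI' 2 h) (nhdsWithin 0 (Ioi 0)) (nhds 4) := by
  have hmain : Tendsto (fun h => ∫ θ in Ioo (-(π/2)) (π/2),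
      (xmax h * Real.sin θ)^2 / Real.sqrt (Pm h θ)) (nhdsWithin 0 (Ioi 0))
      (nhds (∫ θ in Ioo (-(π/2)) (π/2), 2*|Real.sin θ|)) := by
    apply MeasureTheory.tendsto_integral_filter_of_dominated_convergence
      (bound := fun _ => (4:ℝ))
    · filter_upwards [self_mem_nhdsWithin] with h hh
      have hcont : Continuous fun θ => (xmax h * Real.sin θ)^2 / Real.sqrt (Pm h θ) :=
        Continuous.div (by fun_prop) (Real.continuous_sqrt.comp contP)
          (fun θ => (sqrtP_pos hh θ).ne')
      exact hcont.aestronglyMeasurable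
    · filter_upwards [Ioo_mem_nhdsGT_of_mem (by norm_num : (0:ℝ) ∈ Ico (0:ℝ) 2)] with h hh
      apply MeasureTheory.ae_of_all
      intro θ
      have hh0 : 0 < h := hh.1
      have hs1 := sq1_gt_one hh0
      have hs3 : Real.sqrt (1+4*h) ≤ 3 := by
        rw [show (3:ℝ) = Real.sqrt 9 by
          rw [show (9:ℝ) = 3^2 by norm_num, Real.sqrt_sq]; norm_num]
        exact Real.sqrt_le_sqrt (by linarith [hh.2])
      have hsin : Real.sin θ^2 ≤ 1 := Real.sin_sq_le_one θ
      have hP4 : Pm h θ ≤ 4 := by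
        unfold Pm; nlinarith
      have hsq2 : Real.sqrt (Pm h θ) ≤ 2 := by
        rw [show (2:ℝ) = Real.sqrt 4 by
          rw [show (4:ℝ) = 2^2 by norm_num, Real.sqrt_sq]; norm_num]
        exact Real.sqrt_le_sqrt hP4
      have hnum : (xmax h * Real.sin θ)^2 ≤ 2 * Pm h θ := by
        rw [mul_pow, xmax_sq hh0.le]
        unfold Pm; nlinarith
      have hF : (0:ℝ) ≤ (xmax h * Real.sin θ)^2 / Real.sqrt (Pm h θ) :=
        div_nonneg (sq_nonneg _) (Real.sqrt_nonneg _)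
      rw [Real.norm_eq_abs, abs_of_nonneg hF, div_le_iff₀ (sqrtP_pos hh0 θ)]
      have hPP : Pm h θ = Real.sqrt (Pm h θ) * Real.sqrt (Pm h θ) :=
        (Real.mul_self_sqrt (P_pos hh0 θ).le).symm
      nlinarith [Real.sqrt_nonneg (Pm h θ)]
    · exact MeasureTheory.integrableOn_const measure_Ioo_lt_top.ne
    · apply MeasureTheory.ae_of_all
      intro θ
      by_cases hs0 : Real.sin θ = 0
      · have : (fun h => (xmax h * Real.sin θ)^2 / Real.sqrt (Pm h θ)) = fun _ => 0 := by
          funext h; simp [hs0]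
        rw [this, hs0]
        simpa using tendsto_const_nhds
      · have hden : Real.sqrt (Pm 0 θ) = |Real.sin θ| := by
          have hPm0 : Pm 0 θ = Real.sin θ^2 := by
            unfold Pm
            rw [show (1:ℝ)+4*0 = 1 by norm_num, Real.sqrt_one]
            ring
          rw [hPm0, Real.sqrt_sq_eq_abs]
        have hcont : ContinuousAt (fun h => (xmax h * Real.sin θ)^2 / Real.sqrt (Pm h θ)) 0 := by
          apply ContinuousAt.div
          · exact (((cont_xmax.mul continuous_const).pow 2)).continuousAt
          · exact (Real.continuous_sqrt.comp (contPh θ)).continuousAt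
          · rw [hden]; exact abs_ne_zero.2 hs0
        have := hcont.tendsto.mono_left (nhdsWithin_le_nhds (s := Ioi (0:ℝ)))
        convert this using 2
        rw [hden]
        have hx0 : xmax 0 = Real.sqrt 2 := by
          unfold xmax; norm_num
        rw [hx0, mul_pow, Real.sq_sqrt (by norm_num : (0:ℝ) ≤ 2), ← sq_abs (Real.sin θ)]
        field_simp [abs_ne_zero.2 hs0]
  have hEq : ∀ᶠ h in nhdsWithin (0:ℝ) (Ioi 0), (fun h => ∫ θ in Ioo (-(π/2)) (π/2),
      (xmax h * Real.sin θ)^2 / Real.sqrt (Pm h θ)) h = ellI' 2 h := by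
    filter_upwards [self_mem_nhdsWithin] with h hh
    exact (ellI'_theta 2 hh).symm
  rw [abs_sin_integral] at hmain
  exact hmain.congr' hEq

/-- Higher Melnikov function with vanishing constant term: if `(b,c) ≠ (0,0)` and
`(16/15) b + (16/3) c = 0`, then `4b + 4c ≠ 0` and `(b I₂ + c I₄')/h → 4b + 4c`. -/
theorem higher_melnikov_linear_coefficient (b c : ℝ) (hne : (b, c) ≠ (0, 0))
    (hconst : (16/15) * b + (16/3) * c = 0) :
    4*b + 4*c ≠ 0 ∧
      Tendsto (fun h => (b * ellI 2 h + c * ellI' 4 h) / h)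
        (nhdsWithin 0 (Ioi 0)) (nhds (4*b + 4*c)) := by
  have hb : b = -5*c := by linarith
  have hc0 : c ≠ 0 := by
    intro h0
    apply hne
    have hb0 : b = 0 := by rw [h0] at hconst; linarith
    rw [hb0, h0]
  constructor
  · rw [hb]; intro hcc; apply hc0; linarith
  · have h4 : 4*b + 4*c = -16*c := by rw [hb]; ring
    rw [h4]
    have hmain : Tendsto (fun h => -4*c * ellI' 2 h) (nhdsWithin 0 (Ioi 0)) (nhds (-16*c)) := by
      have := tendsto_ellI'2.const_mul (-4*c)
      convert this using 1
      norm_num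
      ring
    apply hmain.congr'
    filter_upwards [self_mem_nhdsWithin] with h hh
    have hk := key_identity hh
    have hhne : (h:ℝ) ≠ 0 := ne_of_gt hh
    rw [eq_comm, div_eq_iff hhne, hb]
    linear_combination c * hk
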